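/- For every natural number n there exist subspaces S, T of ℂⁿ such that dim α(S,T) = ⌊n/2⌋, i.e., finrank ℂ (((T ⊔ Sᗮ) ⊓ S) ⊓ (S ⊓ T)ᗮ) = n / 2 (natural number division). -/

import Mathlib

open Submodule Module

lemma mem_orthogonal_span_iff' {E : Type*} [NormedAddCommGroup E] [InnerProductSpace ℂ E]
    (s : Set E) (x : E) :
    x ∈ (Submodule.span ℂ s)ᗮ ↔ ∀ v ∈ s, (inner ℂ v x : ℂ) = 0 := by
  constructor
  · intro h v hv
    exact h v (Submodule.subset_span hv)
  · intro h u hu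
    induction hu using Submodule.span_induction with
    | mem v hv => exact h v hv
    | zero => simp
    | add a b _ _ ha hb => rw [inner_add_left, ha, hb, add_zero]
    | smul c a _ ha => rw [inner_smul_left, ha, mul_zero]

theorem stmt_7 (n : ℕ) :
    ∃ S T : Submodule ℂ (EuclideanSpace ℂ (Fin n)),
      Module.finrank ℂ
          ((((T ⊔ Sᗮ) ⊓ S) ⊓ (S ⊓ T)ᗮ) : Submodule ℂ (EuclideanSpace ℂ (Fin n))) =
        n / 2 := by
  set k := n / 2 with hk
  have h2k : 2 * k ≤ n := Nat.mul_div_le n 2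
  have hj1 : ∀ i : Fin k, (i : ℕ) < n := fun i => lt_of_lt_of_le i.2 (by omega)
  have hj2 : ∀ i : Fin k, k + (i : ℕ) < n := fun i => by have := i.2; omega
  set e : Fin n → EuclideanSpace ℂ (Fin n) := fun i => EuclideanSpace.single i 1 with he
  set j1 : Fin k → Fin n := fun i => ⟨i, hj1 i⟩ with hj1def
  set j2 : Fin k → Fin n := fun i => ⟨k + i, hj2 i⟩ with hj2def
  set S : Submodule ℂ (EuclideanSpace ℂ (Fin n)) :=
    Submodule.span ℂ (Set.range fun i => e (j1 i)) with hS
  set T : Submodule ℂ (EuclideanSpace ℂ (Fin n)) :=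
    Submodule.span ℂ (Set.range fun i => e (j1 i) + e (j2 i)) with hT
  refine ⟨S, T, ?_⟩
  have horth : Orthonormal ℂ e := EuclideanSpace.orthonormal_single
  have hone := orthonormal_iff_ite.mp horth
  have hmemSo : ∀ j : Fin n, k ≤ (j : ℕ) → e j ∈ Sᗮ := by
    intro j hj
    rw [hS, mem_orthogonal_span_iff']
    rintro v ⟨i, rfl⟩
    have hne : j1 i ≠ j := by
      intro hcontra
      have : (i : ℕ) = (j : ℕ) := congrArg Fin.val hcontra
      have := i.2; omega
    simp [hone, hne]
  -- h1 : T ⊔ Sᗮ = ⊤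
  have htop : Submodule.span ℂ (Set.range e) = ⊤ := by
    have hb := (EuclideanSpace.basisFun (Fin n) ℂ).toBasis.span_eq
    rwa [(EuclideanSpace.basisFun (Fin n) ℂ).coe_toBasis,
      show ⇑(EuclideanSpace.basisFun (Fin n) ℂ) = e from
        funext fun i => by simp [he]] at hb
  have h1 : T ⊔ Sᗮ = ⊤ := by
    rw [eq_top_iff, ← htop]
    rw [Submodule.span_le]
    rintro _ ⟨j, rfl⟩
    by_cases hjk : k ≤ (j : ℕ)
    · exact Submodule.mem_sup_right (hmemSo j hjk)
    · push_neg at hjk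
      set i : Fin k := ⟨j, hjk⟩ with hi
      have hj1i : j1 i = j := by ext; rfl
      have : e j = (e (j1 i) + e (j2 i)) - e (j2 i) := by rw [hj1i]; abel
      rw [this]
      exact sub_mem
        (Submodule.mem_sup_left (Submodule.subset_span ⟨i, rfl⟩))
        (Submodule.mem_sup_right (hmemSo (j2 i) (by simp [hj2def])))
  -- h2 : S ⊓ T = ⊥
  have h2 : S ⊓ T = ⊥ := by
    rw [eq_bot_iff]
    intro x hx
    obtain ⟨hxS, hxT⟩ := Submodule.mem_inf.mp hx
    rw [hS, mem_span_range_iff_exists_fun] at hxS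
    rw [hT, mem_span_range_iff_exists_fun] at hxT
    obtain ⟨d, hd⟩ := hxS
    obtain ⟨c, hc⟩ := hxT
    have hcz : ∀ i0 : Fin k, c i0 = 0 := by
      intro i0
      have hx1 : x (j2 i0) = c i0 := by
        rw [← hc]
        have : (∑ i, c i • (e (j1 i) + e (j2 i))) (j2 i0)
            = ∑ i, c i • ((e (j1 i)) (j2 i0) + (e (j2 i)) (j2 i0)) := by
          rw [WithLp.ofLp_sum, Finset.sum_apply]; rfl
        rw [this]
        have hval : ∀ i : Fin k, c i • ((e (j1 i)) (j2 i0) + (e (j2 i)) (j2 i0))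
            = if i = i0 then c i else 0 := by
          intro i
          have h1i : (e (j1 i)) (j2 i0) = 0 := by
            have : j2 i0 ≠ j1 i := by
              intro hcontra
              have : k + (i0 : ℕ) = (i : ℕ) := congrArg Fin.val hcontra
              have := i.2; omega
            simp [he, EuclideanSpace.single_apply, this]
          have h2i : (e (j2 i)) (j2 i0) = if i = i0 then 1 else 0 := by
            simp only [he, EuclideanSpace.single_apply]
            by_cases hii : i = i0
            · simp [hii]
            · have : j2 i0 ≠ j2 i := by
                intro hcontra
                have hvv : k + (i0 : ℕ) = k + (i : ℕ) := congrArg Fin.val hcontra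
                exact hii (Fin.ext (by omega))
              simp [this, hii]
          rw [h1i, h2i]
          by_cases hii : i = i0 <;> simp [hii]
        rw [Finset.sum_congr rfl fun i _ => hval i]
        simp
      have hx2 : x (j2 i0) = 0 := by
        rw [← hd]
        have : (∑ i, d i • e (j1 i)) (j2 i0) = ∑ i, d i • ((e (j1 i)) (j2 i0)) := by
          rw [WithLp.ofLp_sum, Finset.sum_apply]; rfl
        rw [this]
        apply Finset.sum_eq_zero
        intro i _
        have : j2 i0 ≠ j1 i := by
          intro hcontra
          have : k + (i0 : ℕ) = (i : ℕ) := congrArg Fin.val hcontra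
          have := i.2; omega
        simp [he, EuclideanSpace.single_apply, this]
      rw [hx1] at hx2; exact hx2
    have : x = 0 := by
      rw [← hc]
      apply Finset.sum_eq_zero
      intro i _
      rw [hcz i, zero_smul]
    simp [this]
  rw [h1, h2, Submodule.bot_orthogonal_eq_top, top_inf_eq, inf_top_eq]
  have hli : LinearIndependent ℂ (fun i => e (j1 i)) := by
    have hinj : Function.Injective j1 := by
      intro a b hab
      have h := congrArg Fin.val hab
      exact Fin.ext h
    exact (horth.comp j1 hinj).linearIndependent
  rw [hS, finrank_span_eq_card hli, Fintype.card_fin]
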